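/- arXiv:1805.02953 — 3 statements merged into one kernel-verified Lean document; each statement's English description precedes it below -/
import Mathlib

section
/- Let T be a bounded operator on a Hilbert space H that is bounded below and pure (i.e., ⋂_{n≥0} T^n H = {0}), with L = (T*T)^{-1}T* and P = Id - TL. If x ∈ H satisfies P L^n x = 0 for all n ≥ 0, then x = 0. -/
/-- For `T` bounded below and pure (`⋂ₙ Tⁿ H = {0}`), with `L = (T*T)⁻¹T*` and `P = Id - TL`,
if `P Lⁿ x = 0` for all `n ≥ 0` then `x = 0`. -/
theorem stmt_5 {H : Type*} [NormedAddCommGroup H] [InnerProductSpace ℂ H] [CompleteSpace H]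
    (T : H →L[ℂ] H) (h : ∃ C > (0 : ℝ), ∀ x : H, C * ‖x‖ ≤ ‖T x‖)
    (hpure : (⨅ n : ℕ, LinearMap.range ((T ^ n : H →L[ℂ] H) : H →ₗ[ℂ] H)) = ⊥)
    (L : H →L[ℂ] H)
    (hL : L = Ring.inverse (ContinuousLinearMap.adjoint T * T) * ContinuousLinearMap.adjoint T)
    (P : H →L[ℂ] H) (hP : P = 1 - T * L)
    (x : H) (hx : ∀ n : ℕ, P ((L ^ n) x) = 0) :
    x = 0 := by
  have key : ∀ n : ℕ, x = (T ^ n) ((L ^ n) x) := by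
    intro n
    induction n with
    | zero => simp
    | succ n ih =>
      have h1 : (L ^ n) x = T (L ((L ^ n) x)) := by
        have h0 := hx n
        rw [hP] at h0
        have h2 : (L ^ n) x - T (L ((L ^ n) x)) = 0 := by
          simpa [ContinuousLinearMap.sub_apply, ContinuousLinearMap.mul_apply] using h0
        exact sub_eq_zero.mp h2
      calc x = (T ^ n) ((L ^ n) x) := ih
        _ = (T ^ n) (T (L ((L ^ n) x))) := by rw [← h1]
        _ = (T ^ (n + 1)) ((L ^ (n + 1)) x) := by
            rw [pow_succ T, pow_succ' L]
            simp [ContinuousLinearMap.mul_apply]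
  have hmem : x ∈ (⨅ n : ℕ, LinearMap.range ((T ^ n : H →L[ℂ] H) : H →ₗ[ℂ] H)) := by
    rw [Submodule.mem_iInf]
    intro n
    exact ⟨(L ^ n) x, (key n).symm⟩
  rw [hpure] at hmem
  simpa using hmem
end

section
/- If T is a concave bounded operator on a Hilbert space H, then its spectral radius satisfies r(T) ≤ 1. -/
open Filter Real Topology

/-- The auxiliary real limit: `(1 + C*n) ^ (1/(2n)) → 1`. -/
lemma aux_rpow_tendsto (C : ℝ) (hC0 : 0 ≤ C) :
    Tendsto (fun n : ℕ => (1 + n * C) ^ ((1:ℝ)/2 * (1/n))) atTop (𝓝 1) := by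
  have he : Tendsto (fun n : ℕ => ((1:ℝ)/2 * (1/n)) * Real.log (1 + n * C)) atTop (𝓝 0) := by
    have hlog : Tendsto (fun x : ℝ => Real.log x / x) atTop (𝓝 0) :=
      Real.isLittleO_log_id_atTop.tendsto_div_nhds_zero
    have h1 : Tendsto (fun n : ℕ => Real.log (1 + C) / (2 * n)) atTop (𝓝 0) := by
      have := (tendsto_const_div_atTop_nhds_zero_nat (Real.log (1 + C) / 2))
      refine this.congr fun n => ?_
      rw [div_div]
    have h2 : Tendsto (fun n : ℕ => Real.log (2 * n) / (2 * n)) atTop (𝓝 0) := by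
      have h2n : Tendsto (fun n : ℕ => (2 * n : ℝ)) atTop atTop :=
        tendsto_natCast_atTop_atTop.const_mul_atTop (by norm_num)
      exact hlog.comp h2n
    have hsum : Tendsto (fun n : ℕ => Real.log (1 + C) / (2 * n) + Real.log (2 * n) / (2 * n))
        atTop (𝓝 0) := by simpa using h1.add h2
    refine tendsto_of_tendsto_of_tendsto_of_le_of_le' tendsto_const_nhds hsum ?_ ?_
    · filter_upwards [eventually_ge_atTop 1] with n hn
      have hn1 : (1:ℝ) ≤ n := by exact_mod_cast hn
      have hb : (1:ℝ) ≤ 1 + n * C := by nlinarith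
      have : 0 ≤ Real.log (1 + n * C) := Real.log_nonneg hb
      positivity
    · filter_upwards [eventually_ge_atTop 1] with n hn
      have hn1 : (1:ℝ) ≤ n := by exact_mod_cast hn
      have hb : (0:ℝ) < 1 + n * C := by nlinarith
      have hle : 1 + n * C ≤ (1 + C) * (2 * n) := by nlinarith
      have hlogle : Real.log (1 + n * C) ≤ Real.log (1 + C) + Real.log (2 * n) := by
        calc Real.log (1 + n * C) ≤ Real.log ((1 + C) * (2 * n)) :=
              Real.log_le_log hb hle
          _ = Real.log (1 + C) + Real.log (2 * n) :=
              Real.log_mul (by nlinarith) (by nlinarith)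
      have h2n0 : (0:ℝ) < 2 * n := by nlinarith
      rw [one_div, one_div, mul_comm]
      calc Real.log (1 + n * C) * ((2:ℝ)⁻¹ * (n:ℝ)⁻¹)
          = Real.log (1 + n * C) / (2 * n) := by
            rw [div_eq_mul_inv, mul_inv]
        _ ≤ (Real.log (1 + C) + Real.log (2 * n)) / (2 * n) := by
            gcongr
        _ = Real.log (1 + C) / (2 * n) + Real.log (2 * n) / (2 * n) := by ring
  have hexp : Tendsto (fun n : ℕ => Real.exp (((1:ℝ)/2 * (1/n)) * Real.log (1 + n * C)))
      atTop (𝓝 1) := by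
    simpa [Function.comp_def] using (Real.continuous_exp.tendsto 0).comp he
  refine Tendsto.congr' ?_ hexp
  filter_upwards [eventually_ge_atTop 1] with n hn
  have hn1 : (1:ℝ) ≤ n := by exact_mod_cast hn
  have hb : (0:ℝ) < 1 + n * C := by nlinarith
  rw [Real.rpow_def_of_pos hb, mul_comm]

/-- A concave bounded operator on a Hilbert space has spectral radius at most `1`. -/
theorem stmt_9 {H : Type*} [NormedAddCommGroup H] [InnerProductSpace ℂ H] [CompleteSpace H]
    (T : H →L[ℂ] H) (h : ∀ x : H, ‖(T ^ 2) x‖ ^ 2 + ‖x‖ ^ 2 ≤ 2 * ‖T x‖ ^ 2) :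
    spectralRadius ℂ T ≤ 1 := by
  set C := ‖T‖ ^ 2 with hCdef
  have hC0 : 0 ≤ C := sq_nonneg _
  -- differences are bounded by the first difference
  have hA : ∀ (n : ℕ) (x : H),
      ‖(T ^ (n+1)) x‖ ^ 2 ≤ ‖(T ^ n) x‖ ^ 2 + (‖T x‖ ^ 2 - ‖x‖ ^ 2) := by
    intro n x
    induction n with
    | zero => simp
    | succ n ih =>
      have h2 := h ((T ^ n) x)
      have e1 : (T ^ 2) ((T ^ n) x) = (T ^ (n + 2)) x := by
        rw [show n + 2 = 2 + n by ring, pow_add, ContinuousLinearMap.mul_apply]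
      have e2 : T ((T ^ n) x) = (T ^ (n + 1)) x := by
        rw [pow_succ', ContinuousLinearMap.mul_apply]
      rw [e1, e2] at h2
      linarith
  -- linear growth of squared norms
  have hB : ∀ (n : ℕ) (x : H), ‖(T ^ n) x‖ ^ 2 ≤ (1 + n * C) * ‖x‖ ^ 2 := by
    intro n x
    induction n with
    | zero => simp
    | succ n ih =>
      have h1 := hA n x
      have hTx : ‖T x‖ ^ 2 ≤ C * ‖x‖ ^ 2 := by
        have := T.le_opNorm x
        rw [hCdef]
        nlinarith [norm_nonneg (T x), norm_nonneg x, norm_nonneg T]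
      have hx0 : 0 ≤ ‖x‖ ^ 2 := sq_nonneg _
      rw [Nat.cast_succ]
      nlinarith
  -- operator norm bound
  have hN : ∀ n : ℕ, ‖T ^ n‖ ≤ (1 + n * C) ^ ((1:ℝ)/2) := by
    intro n
    have hb0 : (0:ℝ) ≤ 1 + n * C := by positivity
    refine ContinuousLinearMap.opNorm_le_bound _ (by positivity) fun x => ?_
    have hs := Real.sqrt_le_sqrt (hB n x)
    rw [Real.sqrt_sq (norm_nonneg _), Real.sqrt_mul hb0, Real.sqrt_sq (norm_nonneg _)] at hs
    rwa [Real.sqrt_eq_rpow] at hs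
  -- Gelfand's formula
  have hF : Tendsto (fun n : ℕ => ENNReal.ofReal (‖T ^ n‖ ^ ((1:ℝ) / n))) atTop
      (𝓝 (spectralRadius ℂ T)) := spectrum.pow_norm_pow_one_div_tendsto_nhds_spectralRadius T
  have hg := aux_rpow_tendsto C hC0
  have hG : Tendsto (fun n : ℕ => ENNReal.ofReal ((1 + n * C) ^ ((1:ℝ)/2 * (1/n)))) atTop
      (𝓝 1) := by
    have := ENNReal.tendsto_ofReal hg
    simpa using this
  refine le_of_tendsto_of_tendsto hF hG ?_
  filter_upwards [eventually_ge_atTop 1] with n hn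
  apply ENNReal.ofReal_le_ofReal
  have hb0 : (0:ℝ) ≤ 1 + n * C := by positivity
  calc ‖T ^ n‖ ^ ((1:ℝ)/n)
      ≤ ((1 + n * C) ^ ((1:ℝ)/2)) ^ ((1:ℝ)/n) :=
        Real.rpow_le_rpow (norm_nonneg _) (hN n) (by positivity)
    _ = (1 + n * C) ^ ((1:ℝ)/2 * (1/n)) := by
        rw [← Real.rpow_mul hb0]
end

section
/- Every concave operator on a Hilbert space is bounded below: if ‖T²x‖² + ‖x‖² ≤ 2‖Tx‖² for all x, then ‖Tx‖ ≥ ‖x‖ for all x (so in particular T is injective with closed range). -/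
/-- Every concave operator on a Hilbert space is bounded below: `‖Tx‖ ≥ ‖x‖` for all `x`. -/
theorem stmt_11 {H : Type*} [NormedAddCommGroup H] [InnerProductSpace ℂ H] [CompleteSpace H]
    (T : H →L[ℂ] H) (h : ∀ x : H, ‖(T ^ 2) x‖ ^ 2 + ‖x‖ ^ 2 ≤ 2 * ‖T x‖ ^ 2) :
    ∀ x : H, ‖x‖ ≤ ‖T x‖ := by
  intro x
  by_contra hlt
  push_neg at hlt
  set a : ℕ → ℝ := fun n => ‖(T ^ n) x‖ ^ 2 with ha
  have hpow : ∀ n : ℕ, (T ^ (n + 1)) x = T ((T ^ n) x) := by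
    intro n
    rw [pow_succ']
    rfl
  have hkey : ∀ n : ℕ, a (n + 2) - a (n + 1) ≤ a (n + 1) - a n := by
    intro n
    have := h ((T ^ n) x)
    have h2 : (T ^ 2) ((T ^ n) x) = (T ^ (n + 2)) x := by
      rw [show n + 2 = 2 + n by ring, pow_add]
      rfl
    rw [h2, ← hpow n] at this
    simp only [ha]
    linarith
  have hmono : ∀ n : ℕ, a (n + 1) - a n ≤ a 1 - a 0 := by
    intro n
    induction n with
    | zero => exact le_refl _
    | succ k ih => exact le_trans (hkey k) ih
  have hbound : ∀ n : ℕ, a n ≤ a 0 + n * (a 1 - a 0) := by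
    intro n
    induction n with
    | zero => simp
    | succ k ih =>
      have := hmono k
      push_cast
      linarith
  have ha0 : a 0 = ‖x‖ ^ 2 := by simp [ha]
  have ha1 : a 1 = ‖T x‖ ^ 2 := by simp [ha, hpow 0]
  have hd : a 1 - a 0 < 0 := by
    rw [ha0, ha1]
    have := norm_nonneg (T x)
    nlinarith
  obtain ⟨n, hn⟩ := exists_nat_gt (a 0 / (-(a 1 - a 0)))
  have hpos : a n ≥ 0 := by positivity
  have : a 0 + n * (a 1 - a 0) < 0 := by
    rw [div_lt_iff₀ (by linarith)] at hn
    nlinarith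
  linarith [hbound n]
end
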